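/- Let f : Ω × ℝ × ℝ^N → [0,∞) be a Carathéodory function convex with respect to the last variable, and h : ℝ^N → [0,∞) convex. If f satisfies the anti-jump condition (H^conv), then so does f + h (i.e. the function (x,t,ξ) ↦ f(x,t,ξ) + h(ξ)). -/

import Mathlib

open MeasureTheory Set

/-- Greatest convex minorant of `φ : ℝ^N → ℝ`: the pointwise supremum of all convex
functions lying below `φ`. -/
noncomputable def gcm {N : ℕ} (φ : EuclideanSpace ℝ (Fin N) → ℝ)
    (ξ : EuclideanSpace ℝ (Fin N)) : ℝ :=
  ⨆ g : {g : EuclideanSpace ℝ (Fin N) → ℝ // ConvexOn ℝ univ g ∧ ∀ x, g x ≤ φ x},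
    g.1 ξ

/-- `f⁻_{B(x,ε)}(t,ξ) = essinf_{y ∈ B(x,ε) ∩ Ω} f(y,t,ξ)`. -/
noncomputable def fminus {N : ℕ} (Ω : Set (EuclideanSpace ℝ (Fin N)))
    (f : EuclideanSpace ℝ (Fin N) → ℝ → EuclideanSpace ℝ (Fin N) → ℝ)
    (x : EuclideanSpace ℝ (Fin N)) (ε t : ℝ) (ξ : EuclideanSpace ℝ (Fin N)) : ℝ :=
  essInf (fun y => f y t ξ) (volume.restrict (Metric.ball x ε ∩ Ω))

/-- The anti-jump condition `(H^conv)` with exponent `p`. -/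
def Hconv {N : ℕ} (Ω : Set (EuclideanSpace ℝ (Fin N)))
    (f : EuclideanSpace ℝ (Fin N) → ℝ → EuclideanSpace ℝ (Fin N) → ℝ) (p : ℝ) : Prop :=
  ∀ k₁ k₂ : ℝ, 0 < k₁ → 0 < k₂ → ∃ C > (0:ℝ),
    ∀ᵐ x ∂(volume.restrict Ω), ∀ t ∈ Ioo (-k₁) k₁, ∀ ξ : EuclideanSpace ℝ (Fin N),
      ∀ ε > (0:ℝ),
        gcm (fminus Ω f x ε t) ξ + ‖ξ‖ ^ (max p (N:ℝ)) ≤ k₂ / ε ^ (N:ℝ) →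
          f x t ξ ≤ C * (gcm (fminus Ω f x ε t) ξ + 1)

section Aux

open Filter

lemma essInf_real_eq_sSup {α : Type*} [MeasurableSpace α] (μ : Measure α) (g : α → ℝ) :
    essInf g μ = sSup {a : ℝ | ∀ᵐ y ∂μ, a ≤ g y} := Filter.liminf_eq

lemma bddAbove_essSet {α : Type*} [MeasurableSpace α] {μ : Measure α} (hμ : μ ≠ 0) (g : α → ℝ) :
    BddAbove {a : ℝ | ∀ᵐ y ∂μ, a ≤ g y} := by
  by_contra hb
  rw [not_bddAbove_iff] at hb
  have hall : ∀ n : ℕ, ∀ᵐ y ∂μ, (n : ℝ) ≤ g y := by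
    intro n
    obtain ⟨a, ha, hna⟩ := hb n
    filter_upwards [ha] with y hy using le_trans hna.le hy
  have : ∀ᵐ y ∂μ, ∀ n : ℕ, (n : ℝ) ≤ g y := (ae_all_iff).2 hall
  have hne : (ae μ).NeBot := ae_neBot.mpr hμ
  obtain ⟨y, hy⟩ := this.exists
  obtain ⟨n, hn⟩ := exists_nat_gt (g y)
  exact absurd (hy n) (not_le.2 hn)

lemma essInf_real_nonneg {α : Type*} [MeasurableSpace α] (μ : Measure α) {g : α → ℝ}
    (hg : ∀ y, 0 ≤ g y) : 0 ≤ essInf g μ := by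
  rw [essInf_real_eq_sSup]
  rcases eq_or_ne μ 0 with rfl | hμ
  · have : {a : ℝ | ∀ᵐ y ∂(0 : Measure α), a ≤ g y} = univ := by
      ext a; simp
    rw [this, Real.sSup_univ]
  · exact le_csSup (bddAbove_essSet hμ g)
      (show ∀ᵐ y ∂μ, (0:ℝ) ≤ g y by filter_upwards with y using hg y)

lemma essInf_real_add_const {α : Type*} [MeasurableSpace α] {μ : Measure α} (hμ : μ ≠ 0)
    {g : α → ℝ} (hg : ∀ y, 0 ≤ g y) (c : ℝ) (hc : 0 ≤ c) :
    essInf (fun y => g y + c) μ = essInf g μ + c := by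
  rw [essInf_real_eq_sSup, essInf_real_eq_sSup]
  set S := {a : ℝ | ∀ᵐ y ∂μ, a ≤ g y} with hS
  set S' := {a : ℝ | ∀ᵐ y ∂μ, a ≤ g y + c} with hS'
  have h0S : (0:ℝ) ∈ S := by
    show ∀ᵐ y ∂μ, (0:ℝ) ≤ g y
    filter_upwards with y using hg y
  have h0S' : (0:ℝ) ∈ S' := by
    show ∀ᵐ y ∂μ, (0:ℝ) ≤ g y + c
    filter_upwards with y using le_add_of_nonneg_of_le (hg y) hc
  have hbS' : BddAbove S' := bddAbove_essSet hμ _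
  have hbS : BddAbove S := bddAbove_essSet hμ _
  apply le_antisymm
  · apply csSup_le ⟨0, h0S'⟩
    intro a ha
    have : a - c ∈ S := by
      show ∀ᵐ y ∂μ, a - c ≤ g y
      filter_upwards [ha] with y hy; linarith
    have := le_csSup hbS this
    linarith
  · have : sSup S ≤ sSup S' - c := by
      apply csSup_le ⟨0, h0S⟩
      intro a ha
      have : a + c ∈ S' := by
        show ∀ᵐ y ∂μ, a + c ≤ g y + c
        filter_upwards [ha] with y hy; linarith
      have := le_csSup hbS' this
      linarith
    linarith

variable {N : ℕ}

lemma gcm_bddAbove (φ : EuclideanSpace ℝ (Fin N) → ℝ) (ξ : EuclideanSpace ℝ (Fin N)) :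
    BddAbove (Set.range fun g :
      {g : EuclideanSpace ℝ (Fin N) → ℝ // ConvexOn ℝ univ g ∧ ∀ x, g x ≤ φ x} => g.1 ξ) := by
  refine ⟨φ ξ, ?_⟩
  rintro _ ⟨g, rfl⟩
  exact g.2.2 ξ

lemma gcm_nonneg {φ : EuclideanSpace ℝ (Fin N) → ℝ} (hφ : ∀ x, 0 ≤ φ x)
    (ξ : EuclideanSpace ℝ (Fin N)) : 0 ≤ gcm φ ξ :=
  le_ciSup (gcm_bddAbove φ ξ) ⟨fun _ => 0, convexOn_const 0 convex_univ, fun x => hφ x⟩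

lemma gcm_mono {φ ψ : EuclideanSpace ℝ (Fin N) → ℝ} (hφ : ∀ x, 0 ≤ φ x)
    (hle : ∀ x, φ x ≤ ψ x) (ξ : EuclideanSpace ℝ (Fin N)) : gcm φ ξ ≤ gcm ψ ξ := by
  have : Nonempty {g : EuclideanSpace ℝ (Fin N) → ℝ // ConvexOn ℝ univ g ∧ ∀ x, g x ≤ φ x} :=
    ⟨⟨fun _ => 0, convexOn_const 0 convex_univ, fun x => hφ x⟩⟩
  refine ciSup_le fun g => ?_
  exact le_ciSup (gcm_bddAbove ψ ξ) ⟨g.1, g.2.1, fun x => (g.2.2 x).trans (hle x)⟩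

lemma gcm_add_convex {φ h : EuclideanSpace ℝ (Fin N) → ℝ} (hφ : ∀ x, 0 ≤ φ x)
    (hh : ConvexOn ℝ univ h) (ξ : EuclideanSpace ℝ (Fin N)) :
    gcm φ ξ + h ξ ≤ gcm (fun x => φ x + h x) ξ := by
  have : Nonempty {g : EuclideanSpace ℝ (Fin N) → ℝ // ConvexOn ℝ univ g ∧ ∀ x, g x ≤ φ x} :=
    ⟨⟨fun _ => 0, convexOn_const 0 convex_univ, fun x => hφ x⟩⟩
  have hle : gcm φ ξ ≤ gcm (fun x => φ x + h x) ξ - h ξ := by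
    refine ciSup_le fun g => ?_
    have := le_ciSup (gcm_bddAbove (fun x => φ x + h x) ξ)
      ⟨fun x => g.1 x + h x, g.2.1.add hh, fun x => add_le_add_left (g.2.2 x) _⟩
    change g.1 ξ + h ξ ≤ _ at this
    rw [show gcm (fun x => φ x + h x) ξ = ⨆ g : {g : EuclideanSpace ℝ (Fin N) → ℝ //
        ConvexOn ℝ univ g ∧ ∀ x, g x ≤ φ x + h x}, g.1 ξ from rfl]
    linarith
  linarith

lemma ball_inter_pos (Ω : Set (EuclideanSpace ℝ (Fin N))) :
    ∀ᵐ x ∂(volume.restrict Ω), ∀ ε > (0:ℝ),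
      volume.restrict (Metric.ball x ε ∩ Ω) ≠ 0 := by
  filter_upwards [Besicovitch.ae_tendsto_measure_inter_div volume Ω] with x hx ε hε
  have h2 : ∀ᶠ r in nhdsWithin 0 (Ioi (0:ℝ)),
      (1:ENNReal)/2 < volume (Ω ∩ Metric.closedBall x r) / volume (Metric.closedBall x r) :=
    hx.eventually_const_lt (by norm_num)
  have h3 : Ioo (0:ℝ) ε ∈ nhdsWithin (0:ℝ) (Ioi 0) := Ioo_mem_nhdsGT_of_mem ⟨le_rfl, hε⟩
  obtain ⟨r, hr2, hr3⟩ := (h2.and (Filter.eventually_of_mem h3 (fun r hr => hr))).exists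
  have hnum : volume (Ω ∩ Metric.closedBall x r) ≠ 0 := by
    intro h0
    rw [h0, ENNReal.zero_div] at hr2
    exact absurd hr2 (by norm_num)
  have hsub : Ω ∩ Metric.closedBall x r ⊆ Metric.ball x ε ∩ Ω := by
    intro y hy
    exact ⟨lt_of_le_of_lt hy.2 hr3.2, hy.1⟩
  rw [Ne, Measure.restrict_eq_zero]
  intro h0
  exact hnum (measure_mono_null hsub h0)

end Aux

/-- If a non-negative Carathéodory function `f`, convex in the last
variable, satisfies `(H^conv)`, and `h : ℝ^N → [0,∞)` is convex, then
`(x,t,ξ) ↦ f(x,t,ξ) + h(ξ)` also satisfies `(H^conv)`. -/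
theorem stmt11 {N : ℕ}
    (Ω : Set (EuclideanSpace ℝ (Fin N))) (p : ℝ) (hp : 1 ≤ p)
    (f : EuclideanSpace ℝ (Fin N) → ℝ → EuclideanSpace ℝ (Fin N) → ℝ)
    (hf_nonneg : ∀ x t ξ, 0 ≤ f x t ξ)
    (hf_meas : ∀ t ξ, Measurable fun x => f x t ξ)
    (hf_cont : ∀ᵐ x ∂(volume.restrict Ω),
      Continuous fun q : ℝ × EuclideanSpace ℝ (Fin N) => f x q.1 q.2)
    (hf_conv : ∀ᵐ x ∂(volume.restrict Ω), ∀ t, ConvexOn ℝ univ (f x t))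
    (h : EuclideanSpace ℝ (Fin N) → ℝ)
    (hh_nonneg : ∀ ξ, 0 ≤ h ξ) (hh_conv : ConvexOn ℝ univ h)
    (hH : Hconv Ω f p) :
    Hconv Ω (fun x t ξ => f x t ξ + h ξ) p := by
  intro k₁ k₂ hk₁ hk₂
  obtain ⟨C, hC, hae⟩ := hH k₁ k₂ hk₁ hk₂
  refine ⟨C + 1, by linarith, ?_⟩
  filter_upwards [hae, ball_inter_pos Ω] with x hx hdens t ht ξ ε hε hyp
  have hμ' : volume.restrict (Metric.ball x ε ∩ Ω) ≠ 0 := hdens ε hε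
  have hkey : fminus Ω (fun x t ξ => f x t ξ + h ξ) x ε t
      = fun ζ => fminus Ω f x ε t ζ + h ζ := by
    funext ζ
    exact essInf_real_add_const hμ' (fun y => hf_nonneg y t ζ) (h ζ) (hh_nonneg ζ)
  have hφ0 : ∀ ζ, 0 ≤ fminus Ω f x ε t ζ := fun ζ =>
    essInf_real_nonneg _ fun y => hf_nonneg y t ζ
  rw [hkey] at hyp ⊢
  have hGG' : gcm (fminus Ω f x ε t) ξ ≤ gcm (fun ζ => fminus Ω f x ε t ζ + h ζ) ξ :=
    gcm_mono hφ0 (fun ζ => le_add_of_nonneg_right (hh_nonneg ζ)) ξ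
  have hhG' : gcm (fminus Ω f x ε t) ξ + h ξ ≤ gcm (fun ζ => fminus Ω f x ε t ζ + h ζ) ξ :=
    gcm_add_convex hφ0 hh_conv ξ
  have hG0 : 0 ≤ gcm (fminus Ω f x ε t) ξ := gcm_nonneg hφ0 ξ
  have hmain : f x t ξ ≤ C * (gcm (fminus Ω f x ε t) ξ + 1) :=
    hx t ht ξ ε hε (by linarith)
  have hC1 : C * (gcm (fminus Ω f x ε t) ξ + 1)
      ≤ C * (gcm (fun ζ => fminus Ω f x ε t ζ + h ζ) ξ + 1) := by
    apply mul_le_mul_of_nonneg_left (by linarith) hC.le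
  nlinarith [hh_nonneg ξ]
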